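/- In a free product G = A * B with A nontrivial, the free factor A is malnormal: for any g ∈ G \ A, the intersection A ∩ gAg⁻¹ is trivial. -/

import Mathlib

open Monoid

namespace FreeFactorMalnormalAux

open Monoid.CoprodI

section Key

variable {ι : Type*} [DecidableEq ι] {G : ι → Type*} [∀ i, Group (G i)]
  [∀ i, DecidableEq (G i)]

lemma equiv_prod (w : Word G) : Word.equiv w.prod = w :=
  Word.equiv.apply_symm_apply w

lemma prod_equiv (x : CoprodI G) : (Word.equiv x).prod = x :=
  Word.equiv.symm_apply_apply x

lemma prod_injective : Function.Injective (Word.prod : Word G → CoprodI G) := by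
  intro w₁ w₂ h
  rw [← equiv_prod (G := G) w₁, ← equiv_prod (G := G) w₂, h]

lemma neWord_inv_length {i j} (w : NeWord G i j) :
    w.inv.toList.length = w.toList.length := by
  induction w with
  | singleton x h => rfl
  | append w₁ h w₂ ih₁ ih₂ => simp [NeWord.inv, ih₁, ih₂, Nat.add_comm]

lemma exists_neWord (x : CoprodI G) (hx : x ≠ 1) :
    ∃ i j, ∃ w : NeWord G i j, w.toWord = Word.equiv x := by
  obtain ⟨i, j, w, hw⟩ := NeWord.of_word (Word.equiv x) (by
    intro h
    apply hx
    rw [← prod_equiv x, h, Word.prod_empty])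
  exact ⟨i, j, w, hw⟩

lemma neWord_toWord_prod {i j} (w : NeWord G i j) (hw : w.toWord = Word.equiv x) :
    w.prod = x := by
  rw [NeWord.prod, hw, prod_equiv]

lemma fstIdx_of_neWord {i j} (w : NeWord G i j) :
    Word.fstIdx w.toWord = some i := by
  have h : w.toWord.toList = w.toList := rfl
  rw [Word.fstIdx, h, NeWord.toList_head?]
  rfl

lemma equiv_inv_eq {x : CoprodI G} {i j} (w : NeWord G i j)
    (hw : w.toWord = Word.equiv x) : Word.equiv x⁻¹ = w.inv.toWord := by
  have h : w.inv.toWord.prod = x⁻¹ := by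
    show w.inv.prod = x⁻¹
    rw [NeWord.inv_prod, neWord_toWord_prod w hw]
  rw [← h, equiv_prod]

lemma length_equiv_inv (x : CoprodI G) :
    (Word.equiv x⁻¹).toList.length = (Word.equiv x).toList.length := by
  by_cases hx : x = 1
  · subst hx; rw [inv_one]
  · obtain ⟨i, j, w, hw⟩ := exists_neWord x hx
    rw [equiv_inv_eq w hw, ← hw]
    exact neWord_inv_length w

lemma conj_ne_one {i : ι} {a c : G i} (ha : a ≠ 1) : c⁻¹ * a * c ≠ 1 := by
  intro h1
  apply ha
  have := congrArg (fun z => c * z * c⁻¹) h1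
  simpa [mul_assoc] using this

/-- Key lemma: if `a ≠ 1` and `of a * x = x * of a'` then `x` lies in the `i`-th factor. -/
lemma key (i : ι) : ∀ (n : ℕ) (x : CoprodI G), (Word.equiv x).toList.length ≤ n →
    ∀ a a' : G i, a ≠ 1 → CoprodI.of a * x = x * CoprodI.of a' →
    x ∈ (CoprodI.of : G i →* CoprodI G).range := by
  intro n
  induction n with
  | zero =>
    intro x hlen a a' ha h
    have hnil : (Word.equiv x).toList = [] := List.eq_nil_of_length_eq_zero (Nat.le_zero.mp hlen)
    have hx : x = 1 := by
      rw [← prod_equiv x]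
      have : Word.equiv x = Word.empty := Word.ext hnil
      rw [this, Word.prod_empty]
    exact hx ▸ one_mem _
  | succ n ih =>
    intro x hlen a a' ha h
    by_cases hx : x = 1
    · exact hx ▸ one_mem _
    have ha' : a' ≠ 1 := by
      rintro rfl
      apply ha
      rw [map_one, mul_one] at h
      have h' : CoprodI.of a * x = 1 * x := by rw [one_mul]; exact h
      have hone : CoprodI.of a = 1 := mul_right_cancel h'
      exact CoprodI.of_injective i (by rw [hone, map_one])
    obtain ⟨j, k, w, hw⟩ := exists_neWord x hx
    by_cases hji : j = i
    · -- strip a letter from the left of x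
      subst hji
      set p := Word.equivPair j (Word.equiv x) with hp
      have hrc : Word.rcons p = Word.equiv x := by
        rw [← Word.equivPair_symm]
        exact (Word.equivPair j).symm_apply_apply _
      have hfst : Word.fstIdx (Word.equiv x) = some j := by
        rw [← hw]; exact fstIdx_of_neWord w
      have hc : p.head ≠ 1 := by
        intro h1
        have ht : Word.rcons p = p.tail := by rw [Word.rcons, dif_pos h1]
        have := p.fstIdx_ne
        rw [← ht, hrc] at this
        exact this hfst
      have hcons : Word.rcons p = Word.cons p.head p.tail p.fstIdx_ne hc := by
        rw [Word.rcons, dif_neg hc]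
      have hxeq : x = CoprodI.of p.head * p.tail.prod := by
        rw [← prod_equiv x, ← hrc, Word.prod_rcons]
      have hlen' : (Word.equiv p.tail.prod).toList.length ≤ n := by
        rw [equiv_prod]
        have hl : (Word.equiv x).toList.length = p.tail.toList.length + 1 := by
          rw [← hrc, hcons]; rfl
        omega
      have heq : CoprodI.of (p.head⁻¹ * a * p.head) * p.tail.prod
          = p.tail.prod * CoprodI.of a' := by
        have h2 : CoprodI.of a * (CoprodI.of p.head * p.tail.prod)
            = CoprodI.of p.head * p.tail.prod * CoprodI.of a' := by
          rw [← hxeq]; exact h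
        have h3 := congrArg (fun z => CoprodI.of p.head⁻¹ * z) h2
        simpa [map_mul, map_inv, mul_assoc] using h3
      obtain ⟨b, hb⟩ := ih p.tail.prod hlen' _ a' (conj_ne_one ha) heq
      exact ⟨p.head * b, by rw [map_mul, hb, ← hxeq]⟩
    by_cases hki : k = i
    · -- strip a letter from the right of x, i.e. from the left of x⁻¹
      subst hki
      have hinv : Word.equiv x⁻¹ = w.inv.toWord := equiv_inv_eq w hw
      set p := Word.equivPair k (Word.equiv x⁻¹) with hp
      have hrc : Word.rcons p = Word.equiv x⁻¹ := by
        rw [← Word.equivPair_symm]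
        exact (Word.equivPair k).symm_apply_apply _
      have hfst : Word.fstIdx (Word.equiv x⁻¹) = some k := by
        rw [hinv]; exact fstIdx_of_neWord w.inv
      have hc : p.head ≠ 1 := by
        intro h1
        have ht : Word.rcons p = p.tail := by rw [Word.rcons, dif_pos h1]
        have := p.fstIdx_ne
        rw [← ht, hrc] at this
        exact this hfst
      have hcons : Word.rcons p = Word.cons p.head p.tail p.fstIdx_ne hc := by
        rw [Word.rcons, dif_neg hc]
      have hxinv : x⁻¹ = CoprodI.of p.head * p.tail.prod := by
        rw [← prod_equiv x⁻¹, ← hrc, Word.prod_rcons]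
      have hxeq : x = p.tail.prod⁻¹ * CoprodI.of p.head⁻¹ := by
        have hx2 : x = (CoprodI.of p.head * p.tail.prod)⁻¹ := by rw [← hxinv, inv_inv]
        rw [hx2, mul_inv_rev, map_inv]
      have hlen' : (Word.equiv (p.tail.prod⁻¹)).toList.length ≤ n := by
        rw [length_equiv_inv, equiv_prod]
        have hl : (Word.equiv x⁻¹).toList.length = p.tail.toList.length + 1 := by
          rw [← hrc, hcons]; rfl
        have hxx : (Word.equiv x⁻¹).toList.length = (Word.equiv x).toList.length :=
          length_equiv_inv x
        omega
      have heq : CoprodI.of a * p.tail.prod⁻¹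
          = p.tail.prod⁻¹ * CoprodI.of (p.head⁻¹ * a' * p.head) := by
        have h2 : CoprodI.of a * (p.tail.prod⁻¹ * CoprodI.of p.head⁻¹)
            = p.tail.prod⁻¹ * CoprodI.of p.head⁻¹ * CoprodI.of a' := by
          rw [← hxeq]; exact h
        have h3 := congrArg (fun z => z * CoprodI.of p.head) h2
        simpa [map_mul, map_inv, mul_assoc] using h3
      obtain ⟨b, hb⟩ := ih (p.tail.prod⁻¹) hlen' a _ ha heq
      exact ⟨b * p.head⁻¹, by rw [map_mul, hb, ← hxeq]⟩
    · -- both ends of x avoid the factor `i`; derive a contradiction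
      exfalso
      have hxprod : w.prod = x := neWord_toWord_prod w hw
      have hij : i ≠ j := fun hh => hji hh.symm
      set left := NeWord.append (NeWord.singleton a ha) hij w with hleft
      set right := NeWord.append w hki (NeWord.singleton a' ha') with hright
      have h1 : left.prod = CoprodI.of a * x := by
        rw [hleft, NeWord.append_prod, NeWord.prod_singleton, hxprod]
      have h2 : right.prod = x * CoprodI.of a' := by
        rw [hright, NeWord.append_prod, NeWord.prod_singleton, hxprod]
      have h3 : left.toWord = right.toWord := by
        apply prod_injective
        show left.prod = right.prod
        rw [h1, h2, h]
      have h4 : left.toList.head? = right.toList.head? := by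
        show left.toWord.toList.head? = right.toWord.toList.head?
        rw [h3]
      rw [NeWord.toList_head?, NeWord.toList_head?] at h4
      exact hji (congrArg Sigma.fst (Option.some.inj h4)).symm

end Key

section Transfer

universe u v

variable (A : Type u) (B : Type v) [Group A] [Group B]

/-- The two factors of the binary coproduct as a `Bool`-indexed family. -/
def Fac : Bool → Type (max u v) := fun b => Bool.rec (ULift.{u} B) (ULift.{v} A) b

instance : ∀ b, Group (Fac A B b)
  | true => inferInstanceAs (Group (ULift.{v} A))
  | false => inferInstanceAs (Group (ULift.{u} B))

/-- The canonical map from the binary coproduct to the indexed coproduct. -/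
def phi : Coprod A B →* CoprodI (Fac A B) :=
  Coprod.lift
    ((CoprodI.of (M := Fac A B) (i := true)).comp MulEquiv.ulift.symm.toMonoidHom)
    ((CoprodI.of (M := Fac A B) (i := false)).comp MulEquiv.ulift.symm.toMonoidHom)

/-- The canonical map from the indexed coproduct to the binary coproduct. -/
def psi : CoprodI (Fac A B) →* Coprod A B :=
  CoprodI.lift fun b => Bool.rec (motive := fun b => Fac A B b →* Coprod A B)
    (Coprod.inr.comp MulEquiv.ulift.toMonoidHom)
    (Coprod.inl.comp MulEquiv.ulift.toMonoidHom) b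

lemma phi_inl (a : A) :
    phi A B (Coprod.inl a) = CoprodI.of (M := Fac A B) (i := true) (ULift.up a) := by
  rw [phi, Coprod.lift_apply_inl]
  rfl

lemma psi_of_true (u : Fac A B true) :
    psi A B (CoprodI.of u) = Coprod.inl (ULift.down (α := A) u) := by
  rw [psi, CoprodI.lift_of]
  rfl

lemma psi_phi (z : Coprod A B) : psi A B (phi A B z) = z := by
  have : (psi A B).comp (phi A B) = MonoidHom.id (Coprod A B) := by
    apply Coprod.hom_ext
    · ext a
      simp only [MonoidHom.comp_apply, MonoidHom.id_apply]
      rw [phi_inl]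
      exact psi_of_true A B (ULift.up a)
    · ext b
      simp only [MonoidHom.comp_apply, MonoidHom.id_apply]
      rw [phi, Coprod.lift_apply_inr]
      show psi A B (CoprodI.of (M := Fac A B) (i := false) (ULift.up b)) = _
      rw [psi]
      exact CoprodI.lift_of _ _
  exact DFunLike.congr_fun this z

end Transfer

end FreeFactorMalnormalAux

open FreeFactorMalnormalAux in
/-- In a free product `G = A ∗ B` with `A` nontrivial, the free factor `A` is malnormal:
for every `g ∉ A`, the intersection `A ⊓ gAg⁻¹` is trivial. -/
theorem freeFactor_malnormal (A B : Type*) [Group A] [Group B] [Nontrivial A]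
    (g : Coprod A B) (hg : g ∉ (Coprod.inl : A →* Coprod A B).range) :
    (Coprod.inl : A →* Coprod A B).range ⊓
        ((Coprod.inl : A →* Coprod A B).range.map (MulAut.conj g).toMonoidHom) = ⊥ := by
  classical
  apply le_antisymm _ bot_le
  intro z hz
  rw [Subgroup.mem_inf] at hz
  obtain ⟨⟨a, ha⟩, hz2⟩ := hz
  rw [Subgroup.mem_map] at hz2
  obtain ⟨z', hz'mem, hz'⟩ := hz2
  obtain ⟨a', ha'⟩ := hz'mem
  rw [Subgroup.mem_bot]
  by_cases h1 : a = 1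
  · rw [← ha, h1, map_one]
  exfalso
  apply hg
  have hconj : g * Coprod.inl a' * g⁻¹ = Coprod.inl a := by
    have : (MulAut.conj g) z' = z := hz'
    rw [ha', ha]
    simpa [MulAut.conj_apply] using this
  have heq : Coprod.inl a * g = g * Coprod.inl a' := by
    rw [← hconj]
    group
  have heq2 : CoprodI.of (M := Fac A B) (i := true) (ULift.up a) * phi A B g
      = phi A B g * CoprodI.of (M := Fac A B) (i := true) (ULift.up a') := by
    have := congrArg (phi A B) heq
    rw [map_mul, map_mul, phi_inl, phi_inl] at this
    exact this
  have hupa : (ULift.up a : Fac A B true) ≠ 1 := by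
    intro h
    exact h1 (congrArg ULift.down h)
  obtain ⟨u, hu⟩ := key true _ (phi A B g) le_rfl _ _ hupa heq2
  refine ⟨ULift.down (α := A) u, ?_⟩
  have : psi A B (phi A B g) = g := psi_phi A B g
  rw [← this, ← hu, psi_of_true]
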